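/- Define H(α, β) = sin α + (β − α) cos α − sin β and, for r ∈ (0,1), 𝒦_r(u) = 2r²(1 − r⁴) sin u / (1 − 2r² cos u + r⁴)². Then 𝒦_r(α)·H(α, β) ≥ 0 for all (α, β) ∈ [0,2π] × [0,2π] lying outside the two open triangles T₁ = {(α,β) : 0 < α < π, 2π − α < β ≤ 2π} and T₂ = {(α,β) : π < α < 2π, 0 ≤ β < 2π − α}. -/

import Mathlib

open Real

/-- Cosine comparison on a symmetric range. -/
lemma cos_le_cos_aux {x y : ℝ} (hx : 0 ≤ x) (hxy : x ≤ y) (h : x + y ≤ 2 * Real.pi) :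
    Real.cos y ≤ Real.cos x := by
  have h1 : Real.cos y - Real.cos x
      = -2 * Real.sin ((y + x) / 2) * Real.sin ((y - x) / 2) := Real.cos_sub_cos y x
  have hs1 : 0 ≤ Real.sin ((y + x) / 2) := by
    apply Real.sin_nonneg_of_nonneg_of_le_pi <;> nlinarith
  have hs2 : 0 ≤ Real.sin ((y - x) / 2) := by
    apply Real.sin_nonneg_of_nonneg_of_le_pi
    · linarith
    · nlinarith [Real.pi_pos]
  nlinarith

/-- The tangent-line defect of the sine function. -/
noncomputable def Hfun (α β : ℝ) : ℝ :=
  Real.sin α + (β - α) * Real.cos α - Real.sin β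

lemma Hfun_hasDerivAt (α t : ℝ) :
    HasDerivAt (fun s => Hfun α s) (Real.cos α - Real.cos t) t := by
  have h1 : HasDerivAt (fun s : ℝ => Real.sin α + (s - α) * Real.cos α - Real.sin s)
      (Real.cos α - Real.cos t) t := by
    have h2 : HasDerivAt (fun s : ℝ => (s - α) * Real.cos α) (1 * Real.cos α) t :=
      ((hasDerivAt_id t).sub_const α).mul_const (Real.cos α)
    have h3 := (h2.const_add (Real.sin α)).sub (Real.hasDerivAt_sin t)
    rw [one_mul] at h3
    exact h3
  simpa [Hfun] using h1

lemma Hfun_key {α β : ℝ} (h0 : 0 < α) (hπ : α < Real.pi) (hβ0 : 0 ≤ β)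
    (hβ : β ≤ 2 * Real.pi - α) : 0 ≤ Hfun α β := by
  have hself : Hfun α α = 0 := by simp [Hfun]
  rcases le_total β α with hc | hc
  · -- antitone on [0, α]
    have hanti : AntitoneOn (fun s => Hfun α s) (Set.Icc 0 α) := by
      apply antitoneOn_of_deriv_nonpos (convex_Icc 0 α)
      · exact (Continuous.continuousOn (by
          have : Continuous (fun s : ℝ => Real.sin α + (s - α) * Real.cos α - Real.sin s) := by
            continuity
          simpa [Hfun] using this))
      · intro t ht
        exact (Hfun_hasDerivAt α t).differentiableAt.differentiableWithinAt
      · intro t ht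
        rw [interior_Icc] at ht
        obtain ⟨ht1, ht2⟩ := ht
        rw [(Hfun_hasDerivAt α t).deriv]
        have := cos_le_cos_aux (le_of_lt ht1) (le_of_lt ht2) (by linarith)
        linarith
    have := hanti ⟨hβ0, hc⟩ ⟨le_of_lt h0, le_refl α⟩ hc
    simp only at this
    rw [hself] at this
    exact this
  · -- monotone on [α, 2π - α]
    have hmono : MonotoneOn (fun s => Hfun α s) (Set.Icc α (2 * Real.pi - α)) := by
      apply monotoneOn_of_deriv_nonneg (convex_Icc α (2 * Real.pi - α))
      · exact (Continuous.continuousOn (by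
          have : Continuous (fun s : ℝ => Real.sin α + (s - α) * Real.cos α - Real.sin s) := by
            continuity
          simpa [Hfun] using this))
      · intro t ht
        exact (Hfun_hasDerivAt α t).differentiableAt.differentiableWithinAt
      · intro t ht
        rw [interior_Icc] at ht
        obtain ⟨ht1, ht2⟩ := ht
        rw [(Hfun_hasDerivAt α t).deriv]
        have := cos_le_cos_aux (le_of_lt h0) (le_of_lt ht1) (by linarith)
        linarith
    have := hmono ⟨le_refl α, by linarith⟩ ⟨hc, hβ⟩ hc
    simp only at this
    rw [hself] at this
    exact this

lemma Hfun_symm (α β : ℝ) : Hfun (2 * Real.pi - α) (2 * Real.pi - β) = - Hfun α β := by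
  simp [Hfun, Real.sin_sub, Real.cos_sub, Real.sin_two_pi, Real.cos_two_pi]
  ring

/-- The kernel `𝒦_r`. -/
noncomputable def kerK (r u : ℝ) : ℝ :=
  2 * r ^ 2 * (1 - r ^ 4) * Real.sin u / (1 - 2 * r ^ 2 * Real.cos u + r ^ 4) ^ 2

theorem pointwise_nonneg_outside_triangles
    (r : ℝ) (hr0 : 0 < r) (hr1 : r < 1)
    (α β : ℝ) (hα : α ∈ Set.Icc 0 (2 * Real.pi)) (hβ : β ∈ Set.Icc 0 (2 * Real.pi))
    (hT1 : ¬ (0 < α ∧ α < Real.pi ∧ 2 * Real.pi - α < β ∧ β ≤ 2 * Real.pi))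
    (hT2 : ¬ (Real.pi < α ∧ α < 2 * Real.pi ∧ 0 ≤ β ∧ β < 2 * Real.pi - α)) :
    0 ≤ kerK r α * Hfun α β := by
  obtain ⟨hα0, hα2⟩ := hα
  obtain ⟨hβ0, hβ2⟩ := hβ
  have hr2 : r ^ 2 < 1 := by nlinarith
  have hr4 : r ^ 4 < 1 := by nlinarith
  have hc : 0 < 2 * r ^ 2 * (1 - r ^ 4) :=
    mul_pos (mul_pos two_pos (pow_pos hr0 2)) (by linarith)
  have hdpos : 0 < 1 - 2 * r ^ 2 * Real.cos α + r ^ 4 := by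
    have h1 : Real.cos α ≤ 1 := Real.cos_le_one α
    have h2 : 0 < (1 - r ^ 2) ^ 2 := pow_pos (by linarith) 2
    nlinarith [sq_nonneg r]
  have hden : 0 < (1 - 2 * r ^ 2 * Real.cos α + r ^ 4) ^ 2 := pow_pos hdpos 2
  by_cases hs : Real.sin α = 0
  · simp [kerK, hs]
  · rcases lt_or_ge α Real.pi with hlt | hge
    · -- α ∈ (0, π)
      have hα0' : 0 < α := by
        rcases lt_or_eq_of_le hα0 with h | h
        · exact h
        · exact absurd (by rw [← h]; simp) hs
      have hβle : β ≤ 2 * Real.pi - α := by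
        by_contra hcon
        push_neg at hcon
        exact hT1 ⟨hα0', hlt, hcon, hβ2⟩
      have hH : 0 ≤ Hfun α β := Hfun_key hα0' hlt hβ0 hβle
      have hsin : 0 ≤ Real.sin α := Real.sin_nonneg_of_nonneg_of_le_pi hα0 (le_of_lt hlt)
      have hker : 0 ≤ kerK r α := by
        unfold kerK
        apply div_nonneg _ (le_of_lt hden)
        have : 0 ≤ 2 * r ^ 2 * (1 - r ^ 4) := le_of_lt hc
        nlinarith
      exact mul_nonneg hker hH
    · -- α ∈ (π, 2π)
      have hπlt : Real.pi < α := by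
        rcases lt_or_eq_of_le hge with h | h
        · exact h
        · exact absurd (by rw [← h]; simp) hs
      have hα2' : α < 2 * Real.pi := by
        rcases lt_or_eq_of_le hα2 with h | h
        · exact h
        · exact absurd (by rw [h]; simp [Real.sin_two_pi]) hs
      have hβge : 2 * Real.pi - α ≤ β := by
        by_contra hcon
        push_neg at hcon
        exact hT2 ⟨hπlt, hα2', hβ0, hcon⟩
      have hH' : 0 ≤ Hfun (2 * Real.pi - α) (2 * Real.pi - β) := by
        apply Hfun_key (by linarith) (by linarith) (by linarith) (by linarith)
      have hH : Hfun α β ≤ 0 := by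
        rw [Hfun_symm α β] at hH'
        linarith
      have hsin : Real.sin α ≤ 0 := by
        have := Real.sin_nonneg_of_nonneg_of_le_pi (x := 2 * Real.pi - α)
          (by linarith) (by linarith)
        rw [Real.sin_sub, Real.sin_two_pi, Real.cos_two_pi] at this
        linarith
      have hker : kerK r α ≤ 0 := by
        unfold kerK
        apply div_nonpos_of_nonpos_of_nonneg _ (le_of_lt hden)
        nlinarith
      have := mul_nonneg (neg_nonneg.mpr hker) (neg_nonneg.mpr hH)
      nlinarith
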